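/- The local differential privacy guarantee of Subset Selection is tight: for any inputs z ≠ z' in Z and any size-d subset S ⊆ Z with z ∈ S and z' ∉ S, the output probabilities satisfy P_z(S) = e^ε · P_{z'}(S) exactly; moreover, for any subset S the ratio P_z(S)/P_{z'}(S) always lies in {e^{−ε}, 1, e^{ε}} (whenever the denominator is nonzero). -/

import Mathlib

/-- The parameter `d = ⌈s / (e^ε + 1)⌉` of the Subset Selection mechanism. -/
noncomputable def ssD (s : ℕ) (ε : ℝ) : ℕ := ⌈(s : ℝ) / (Real.exp ε + 1)⌉₊

/-- The parameter `p = d e^ε / (d e^ε + s - d)` of the Subset Selection mechanism. -/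
noncomputable def ssp (s : ℕ) (ε : ℝ) : ℝ :=
  (ssD s ε : ℝ) * Real.exp ε / ((ssD s ε : ℝ) * Real.exp ε + (s : ℝ) - (ssD s ε : ℝ))

lemma ssD_pos (s : ℕ) (hs : 2 ≤ s) (ε : ℝ) (hε : 0 < ε) : 1 ≤ ssD s ε := by
  rw [ssD, Nat.one_le_iff_ne_zero, ← Nat.pos_iff_ne_zero, Nat.ceil_pos]
  positivity

lemma ssD_le (s : ℕ) (hs : 2 ≤ s) (ε : ℝ) (hε : 0 < ε) : ssD s ε ≤ s - 1 := by
  rw [ssD, Nat.ceil_le]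
  have h1 : (1:ℝ) < Real.exp ε := by
    have := Real.add_one_le_exp ε; linarith
  have hs' : (2:ℝ) ≤ (s:ℝ) := by exact_mod_cast hs
  have hc : ((s-1:ℕ):ℝ) = (s:ℝ) - 1 := by
    rw [Nat.cast_sub (by omega)]; norm_num
  rw [hc, div_le_iff₀ (by positivity)]
  nlinarith

lemma key (s : ℕ) (hs : 2 ≤ s) (ε : ℝ) (hε : 0 < ε) :
    ssp s ε / ((s - 1).choose (ssD s ε - 1) : ℝ) =
      Real.exp ε * ((1 - ssp s ε) / ((s - 1).choose (ssD s ε) : ℝ)) := by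
  have hd1 := ssD_pos s hs ε hε
  have hdle := ssD_le s hs ε hε
  set d := ssD s ε with hdd
  have hA : 0 < (s-1).choose (d-1) := Nat.choose_pos (by omega)
  have hB : 0 < (s-1).choose d := Nat.choose_pos (by omega)
  have hid : (s-1).choose d * d = (s-1).choose (d-1) * (s - d) := by
    have := Nat.choose_succ_right_eq (s-1) (d-1)
    have h' : d - 1 + 1 = d := by omega
    rw [h'] at this
    rw [this]; congr 1; omega
  have hE : 0 < Real.exp ε := Real.exp_pos ε
  have hsd : 0 < (s:ℝ) - d := by
    have : d < s := by omega
    have := (Nat.cast_lt (α := ℝ)).mpr this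
    linarith
  have hdR : 0 < (d:ℝ) := by exact_mod_cast (show 0 < d by omega)
  have hden : 0 < (d:ℝ) * Real.exp ε + s - d := by nlinarith [mul_pos hdR hE]
  have hidR : ((s-1).choose d : ℝ) * d = ((s-1).choose (d-1) : ℝ) * ((s:ℝ) - d) := by
    have := congrArg (Nat.cast (R := ℝ)) hid
    push_cast at this
    rw [Nat.cast_sub (by omega)] at this
    exact_mod_cast this
  rw [ssp, ← hdd]
  have h1p : 1 - (d:ℝ) * Real.exp ε / ((d:ℝ) * Real.exp ε + s - d) = ((s:ℝ)-d)/((d:ℝ) * Real.exp ε + s - d) := by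
    field_simp
    ring
  rw [h1p]
  have hA' : ((s-1).choose (d-1) : ℝ) ≠ 0 := by positivity
  have hB' : ((s-1).choose d : ℝ) ≠ 0 := by positivity
  field_simp
  linear_combination hidR

/-- The probability mass `P_z(S)` of the Subset Selection mechanism with input `z`,
identifying the domain `{1, …, s}` with `Fin s`. -/
noncomputable def ssP (s : ℕ) (ε : ℝ) (z : Fin s) (S : Finset (Fin s)) : ℝ :=
  if S.card = ssD s ε then
    if z ∈ S then ssp s ε / ((s - 1).choose (ssD s ε - 1) : ℝ)
    else (1 - ssp s ε) / ((s - 1).choose (ssD s ε) : ℝ)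
  else 0

/-- The LDP guarantee of Subset Selection is tight: for inputs `z ≠ z'` and any
size-`d` subset `S` with `z ∈ S` and `z' ∉ S`, `P_z(S) = e^ε · P_{z'}(S)` exactly; moreover for
any subset `S` the ratio `P_z(S) / P_{z'}(S)` lies in `{e^{-ε}, 1, e^ε}` whenever the
denominator is nonzero. -/
theorem subsetSelection_LDP_tight (s : ℕ) (hs : 2 ≤ s) (ε : ℝ) (hε : 0 < ε)
    (z z' : Fin s) (hzz' : z ≠ z') :
    (∀ S : Finset (Fin s), S.card = ssD s ε → z ∈ S → z' ∉ S →
      ssP s ε z S = Real.exp ε * ssP s ε z' S) ∧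
    (∀ S : Finset (Fin s), ssP s ε z' S ≠ 0 →
      ssP s ε z S / ssP s ε z' S ∈ ({Real.exp (-ε), 1, Real.exp ε} : Set ℝ)) := by
  have hkey := key s hs ε hε
  constructor
  · intro S hcard hz hz'
    simp only [ssP, if_pos hcard, if_pos hz, if_neg hz']
    exact hkey
  · intro S hne
    by_cases hcard : S.card = ssD s ε
    · by_cases hz : z ∈ S <;> by_cases hz' : z' ∈ S
      · have : ssP s ε z S = ssP s ε z' S := by
          simp only [ssP, if_pos hcard, if_pos hz, if_pos hz']
        right; left; rw [this]; exact div_self hne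
      · right; right
        have h1 : ssP s ε z S = Real.exp ε * ssP s ε z' S := by
          simp only [ssP, if_pos hcard, if_pos hz, if_neg hz']; exact hkey
        rw [h1, mul_div_assoc, div_self hne, mul_one]; rfl
      · left
        have h1 : ssP s ε z' S = Real.exp ε * ssP s ε z S := by
          simp only [ssP, if_pos hcard, if_pos hz', if_neg hz]; exact hkey
        have hzne : ssP s ε z S ≠ 0 := by
          intro h0; rw [h1, h0, mul_zero] at hne; exact hne rfl
        rw [h1, Real.exp_neg, div_mul_eq_div_div_swap, div_self hzne,
          one_div]
      · have : ssP s ε z S = ssP s ε z' S := by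
          simp only [ssP, if_pos hcard, if_neg hz, if_neg hz']
        right; left; rw [this]; exact div_self hne
    · exact absurd (by simp [ssP, hcard]) hne
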